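/- If a graph G admits a proper s-coloring, then so does TS(G); moreover χ(TS(G)) = χ(G). Concretely, if f : V(G) → Z/sZ is a proper coloring of G, then assigning to each independent set I the value (Σ_{v∈I} f(v)) mod s is a proper s-coloring of TS(G). -/

import Mathlib

open SimpleGraph

/-- `I` is an independent (stable) set of `G`. -/
def IsIndep {V : Type*} (G : SimpleGraph V) (I : Finset V) : Prop :=
  ∀ u ∈ I, ∀ v ∈ I, ¬ G.Adj u v

/-- Vertices of the `TS_k`-reconfiguration graph: size-`k` independent sets of `G`. -/
abbrev TSVert {V : Type*} (G : SimpleGraph V) (k : ℕ) := {I : Finset V // I.card = k ∧ IsIndep G I}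

/-- The `TS_k`-reconfiguration graph of `G`: size-`k` independent sets, adjacent iff
`I \ J = {u}`, `J \ I = {v}` and `uv ∈ E(G)`. -/
def TSk {V : Type*} [DecidableEq V] (G : SimpleGraph V) (k : ℕ) : SimpleGraph (TSVert G k) :=
  SimpleGraph.fromRel (fun I J =>
    ∃ u v, (I : Finset V) \ (J : Finset V) = {u} ∧
      (J : Finset V) \ (I : Finset V) = {v} ∧ G.Adj u v)

/-- Vertices of the `TS`-reconfiguration graph: all nonempty independent sets of `G`. -/
abbrev TSVertAll {V : Type*} (G : SimpleGraph V) := {I : Finset V // I.Nonempty ∧ IsIndep G I}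

/-- The `TS`-reconfiguration graph of `G`: nonempty independent sets, adjacent iff
`I \ J = {u}`, `J \ I = {v}` and `uv ∈ E(G)`. -/
def TSfull {V : Type*} [DecidableEq V] (G : SimpleGraph V) : SimpleGraph (TSVertAll G) :=
  SimpleGraph.fromRel (fun I J =>
    ∃ u v, (I : Finset V) \ (J : Finset V) = {u} ∧
      (J : Finset V) \ (I : Finset V) = {v} ∧ G.Adj u v)

lemma sum_ne {V : Type*} [DecidableEq V] (G : SimpleGraph V) {α : Type*} [AddCommGroup α]
    (f : V → α) (hf : ∀ u v, G.Adj u v → f u ≠ f v) :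
    ∀ I J : TSVertAll G, (TSfull G).Adj I J →
      (∑ v ∈ (I : Finset V), f v) ≠ ∑ v ∈ (J : Finset V), f v := by
  have key : ∀ I J : TSVertAll G,
      (∃ u v, (I : Finset V) \ (J : Finset V) = {u} ∧
        (J : Finset V) \ (I : Finset V) = {v} ∧ G.Adj u v) →
      (∑ v ∈ (I : Finset V), f v) ≠ ∑ v ∈ (J : Finset V), f v := by
    rintro ⟨I, hI⟩ ⟨J, hJ⟩ ⟨u, v, hu, hv, huv⟩ heq
    have h1 : ∑ x ∈ I ∩ J, f x + ∑ x ∈ I \ J, f x = ∑ x ∈ I, f x :=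
      Finset.sum_inter_add_sum_sdiff I J f
    have h2 : ∑ x ∈ J ∩ I, f x + ∑ x ∈ J \ I, f x = ∑ x ∈ J, f x :=
      Finset.sum_inter_add_sum_sdiff J I f
    rw [hu, Finset.sum_singleton] at h1
    rw [hv, Finset.sum_singleton, Finset.inter_comm] at h2
    exact hf u v huv (by have := h1.trans (heq.trans h2.symm); exact add_left_cancel this)
  rintro I J hadj
  rcases hadj with ⟨hne, h | h⟩
  · exact key I J h
  · exact fun heq => key J I h heq.symm


/-- If `f` is a proper coloring of `G` by `ZMod s`, then `I ↦ Σ_{v ∈ I} f v` is a proper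
coloring of `TS(G)`; moreover `χ(TS(G)) = χ(G)`. -/
theorem stmt13 {V : Type*} [DecidableEq V] (G : SimpleGraph V) (s : ℕ)
    (f : V → ZMod s) (hf : ∀ u v, G.Adj u v → f u ≠ f v) :
    (∀ I J : TSVertAll G, (TSfull G).Adj I J →
      (∑ v ∈ (I : Finset V), f v) ≠ ∑ v ∈ (J : Finset V), f v) ∧
    (TSfull G).chromaticNumber = G.chromaticNumber := by
  refine ⟨sum_ne G f hf, le_antisymm ?_ ?_⟩
  · apply chromaticNumber_le_of_forall_imp
    intro n ⟨C⟩
    rcases Nat.eq_zero_or_pos n with rfl | hn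
    · have : IsEmpty V := ⟨fun v => (C v).elim0⟩
      have : IsEmpty (TSVertAll G) := ⟨fun ⟨I, ⟨x, _⟩, _⟩ => this.elim x⟩
      exact Colorable.of_isEmpty 0
    · haveI : NeZero n := ⟨hn.ne'⟩
      set g : V → ZMod n := fun v => (((C v).val : ℕ) : ZMod n) with hg
      have hg' : ∀ u v, G.Adj u v → g u ≠ g v := by
        intro u v h he
        apply C.valid h
        have := congrArg ZMod.val he
        rw [hg] at this
        simp only [ZMod.val_cast_of_lt (C u).isLt, ZMod.val_cast_of_lt (C v).isLt] at this
        exact Fin.ext this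
      have D : (TSfull G).Coloring (ZMod n) :=
        Coloring.mk (fun I => ∑ v ∈ (I : Finset V), g v) (fun h => sum_ne G g hg' _ _ h)
      simpa [ZMod.card] using D.colorable
  · apply chromaticNumber_le_of_forall_imp
    intro n ⟨C⟩
    refine ⟨Coloring.mk (fun v => C ⟨{v}, ⟨Finset.singleton_nonempty v,
      fun a ha b hb => by simp_all⟩⟩) ?_⟩
    intro u v huv
    apply C.valid
    have hne : u ≠ v := huv.ne
    constructor
    · simp [Subtype.ext_iff, Finset.singleton_inj]; exact hne
    · exact Or.inl ⟨u, v, by simp [Finset.sdiff_eq_self_iff_disjoint]; exact hne, by simp [Finset.sdiff_eq_self_iff_disjoint]; exact fun h => hne h.symm, huv⟩
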